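/- In the Temperley–Lieb algebra TL_4, let P_t = (A^{10} − A^{-2})e_1 + (A^{10} − A^2)e_2 + (A^{10} − A^6)e_3 + (A^8 − A^4)(e_2e_3 + e_3e_2) + (A^8 − 1)(e_2e_1 + e_1e_2 + e_1e_3) + (A^6 − A^2)(e_1e_2e_3 + e_1e_3e_2 + e_2e_3e_1 + e_3e_2e_1), let P̄_t be obtained from P_t by substituting A ↦ A^{-1} in every coefficient, and set r_t = (1 − A^{12})·1 − P_t and r̄_t = (1 − A^{-12})·1 − P̄_t. Further let d_1 = (A^8 − 1)e_1 − (A^2 − A^6)e_1e_3, d_2 = (A^8 − 1)e_3 − (A^2 − A^6)e_3e_1, d_3 = (A^8 − 1)e_1e_2 − (A^2 − A^6)e_3e_1e_2, d_4 = (A^8 − 1)e_2e_1 − (A^2 − A^6)e_2e_1e_3, d_5 = (A^8 − 1)e_1e_2e_3 − (A^2 − A^6)e_1e_3, and d_6 = (A^8 − 1)e_3e_2e_1 − (A^2 − A^6)e_3e_1. Then the element (A^4 − 1)^2(e_1 + e_3 − e_1e_2e_3 − e_3e_2e_1) lies in the R-submodule of TL_4 generated by r_t, r̄_t, d_1, d_2,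 d_3, d_4, d_5, d_6. -/

import Mathlib

/-!
Temperley–Lieb algebra `TL k` over the ring `R = ℤ[A, A⁻¹]` of Laurent polynomials,
with generators `e_1, …, e_{k-1}` and relations
`eᵢ² = δ eᵢ` (with `δ = -A² - A⁻²`), `eᵢ eᵢ₊₁ eᵢ = eᵢ`, `eᵢ₊₁ eᵢ eᵢ₊₁ = eᵢ₊₁`, and
`eᵢ eⱼ = eⱼ eᵢ` for `|i - j| ≥ 2`.
-/

noncomputable section

/-- The ring `R = ℤ[A, A⁻¹]` of Laurent polynomials over `ℤ`. -/
abbrev R : Type := LaurentPolynomial ℤ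

/-- `A n` denotes the `n`-th power `Aⁿ` of the distinguished invertible element `A`. -/
def A (n : ℤ) : R := LaurentPolynomial.T n

/-- `δ = -A² - A⁻²`. -/
def TLδ : R := -A 2 - A (-2)

/-- The Temperley–Lieb relations on the free `R`-algebra on `n` generators `ι 0, …, ι (n-1)`
(where `ι i` corresponds to `e_{i+1}`). -/
inductive TLRel (n : ℕ) : FreeAlgebra R (Fin n) → FreeAlgebra R (Fin n) → Prop
  | sq (i : Fin n) :
      TLRel n (FreeAlgebra.ι R i * FreeAlgebra.ι R i) (TLδ • FreeAlgebra.ι R i)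
  | braid_right (i j : Fin n) (h : (i : ℕ) + 1 = (j : ℕ)) :
      TLRel n (FreeAlgebra.ι R i * FreeAlgebra.ι R j * FreeAlgebra.ι R i) (FreeAlgebra.ι R i)
  | braid_left (i j : Fin n) (h : (i : ℕ) + 1 = (j : ℕ)) :
      TLRel n (FreeAlgebra.ι R j * FreeAlgebra.ι R i * FreeAlgebra.ι R j) (FreeAlgebra.ι R j)
  | comm (i j : Fin n) (h : (i : ℕ) + 2 ≤ (j : ℕ)) :
      TLRel n (FreeAlgebra.ι R i * FreeAlgebra.ι R j) (FreeAlgebra.ι R j * FreeAlgebra.ι R i)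

/-- The Temperley–Lieb algebra `TL_k` on `k` strands: the associative unital `R`-algebra
with generators `e_1, …, e_{k-1}` and the Temperley–Lieb relations. -/
def TL (k : ℕ) : Type := RingQuot (TLRel (k - 1))

instance (k : ℕ) : Ring (TL k) := inferInstanceAs (Ring (RingQuot _))
instance (k : ℕ) : Algebra R (TL k) := inferInstanceAs (Algebra R (RingQuot _))

/-- The generator `e_{i+1}` of `TL k`, for `i : Fin (k-1)`. -/
def e (k : ℕ) (i : Fin (k - 1)) : TL k :=
  RingQuot.mkAlgHom R (TLRel (k - 1)) (FreeAlgebra.ι R i)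

lemma e_sq (k : ℕ) (i : Fin (k - 1)) : e k i * e k i = TLδ • e k i := by
  have h := RingQuot.mkAlgHom_rel R (TLRel.sq (n := k - 1) i)
  simp only [e, map_mul, map_smul] at h ⊢
  exact h

lemma e_braid_right (k : ℕ) (i j : Fin (k - 1)) (h : (i : ℕ) + 1 = (j : ℕ)) :
    e k i * e k j * e k i = e k i := by
  have h' := RingQuot.mkAlgHom_rel R (TLRel.braid_right (n := k - 1) i j h)
  simp only [e, map_mul] at h' ⊢
  exact h'

lemma e_braid_left (k : ℕ) (i j : Fin (k - 1)) (h : (i : ℕ) + 1 = (j : ℕ)) :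
    e k j * e k i * e k j = e k j := by
  have h' := RingQuot.mkAlgHom_rel R (TLRel.braid_left (n := k - 1) i j h)
  simp only [e, map_mul] at h' ⊢
  exact h'

lemma e_comm (k : ℕ) (i j : Fin (k - 1)) (h : (i : ℕ) + 2 ≤ (j : ℕ)) :
    e k i * e k j = e k j * e k i := by
  have h' := RingQuot.mkAlgHom_rel R (TLRel.comm (n := k - 1) i j h)
  simp only [e, map_mul] at h' ⊢
  exact h'

/-- The canonical `R`-algebra homomorphism `TL k →ₐ[R] TL m` (for `k ≤ m`) sending each
generator `e_i` of `TL k` to the generator `e_i` of `TL m`. -/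
def TLincl {k m : ℕ} (h : k ≤ m) : TL k →ₐ[R] TL m :=
  RingQuot.liftAlgHom R
    ⟨FreeAlgebra.lift R (fun i => e m (Fin.castLE (Nat.sub_le_sub_right h 1) i)), by
      intro x y hxy
      induction hxy with
      | sq i => simp [map_mul, map_smul, FreeAlgebra.lift_ι_apply, e_sq]
      | braid_right i j hij =>
          simp only [map_mul, FreeAlgebra.lift_ι_apply]
          exact e_braid_right m _ _ (by simpa using hij)
      | braid_left i j hij =>
          simp only [map_mul, FreeAlgebra.lift_ι_apply]
          exact e_braid_left m _ _ (by simpa using hij)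
      | comm i j hij =>
          simp only [map_mul, FreeAlgebra.lift_ι_apply]
          exact e_comm m _ _ (by simpa using hij)⟩

@[simp] lemma TLincl_e {k m : ℕ} (h : k ≤ m) (i : Fin (k - 1)) :
    TLincl h (e k i) = e m (Fin.castLE (Nat.sub_le_sub_right h 1) i) := by
  rw [TLincl, e]
  erw [RingQuot.liftAlgHom_mkAlgHom_apply]
  rw [FreeAlgebra.lift_ι_apply]


/-- the Remark of the paper: the element `(A⁴-1)²(e₁ + e₃ - e₁e₂e₃ - e₃e₂e₁)`
lies in the `R`-submodule of `TL₄` generated by the sliding relation elements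
`r_t`, `r̄_t`, `d₁, …, d₆`. -/
theorem remark_relation :
    let e₁ : TL 4 := e 4 ⟨0, by norm_num⟩
    let e₂ : TL 4 := e 4 ⟨1, by norm_num⟩
    let e₃ : TL 4 := e 4 ⟨2, by norm_num⟩
    let Pt : TL 4 := (A 10 - A (-2)) • e₁ + (A 10 - A 2) • e₂ + (A 10 - A 6) • e₃
        + (A 8 - A 4) • (e₂ * e₃ + e₃ * e₂) + (A 8 - 1) • (e₂ * e₁ + e₁ * e₂ + e₁ * e₃)
        + (A 6 - A 2) • (e₁ * e₂ * e₃ + e₁ * e₃ * e₂ + e₂ * e₃ * e₁ + e₃ * e₂ * e₁)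
    let Ptbar : TL 4 := (A (-10) - A 2) • e₁ + (A (-10) - A (-2)) • e₂ + (A (-10) - A (-6)) • e₃
        + (A (-8) - A (-4)) • (e₂ * e₃ + e₃ * e₂) + (A (-8) - 1) • (e₂ * e₁ + e₁ * e₂ + e₁ * e₃)
        + (A (-6) - A (-2)) • (e₁ * e₂ * e₃ + e₁ * e₃ * e₂ + e₂ * e₃ * e₁ + e₃ * e₂ * e₁)
    let rt : TL 4 := (1 - A 12) • (1 : TL 4) - Pt
    let rtbar : TL 4 := (1 - A (-12)) • (1 : TL 4) - Ptbar
    let d₁ : TL 4 := (A 8 - 1) • e₁ - (A 2 - A 6) • (e₁ * e₃)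
    let d₂ : TL 4 := (A 8 - 1) • e₃ - (A 2 - A 6) • (e₃ * e₁)
    let d₃ : TL 4 := (A 8 - 1) • (e₁ * e₂) - (A 2 - A 6) • (e₃ * e₁ * e₂)
    let d₄ : TL 4 := (A 8 - 1) • (e₂ * e₁) - (A 2 - A 6) • (e₂ * e₁ * e₃)
    let d₅ : TL 4 := (A 8 - 1) • (e₁ * e₂ * e₃) - (A 2 - A 6) • (e₁ * e₃)
    let d₆ : TL 4 := (A 8 - 1) • (e₃ * e₂ * e₁) - (A 2 - A 6) • (e₃ * e₁)
    ((A 4 - 1) ^ 2) • (e₁ + e₃ - e₁ * e₂ * e₃ - e₃ * e₂ * e₁)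
      ∈ Submodule.span R ({rt, rtbar, d₁, d₂, d₃, d₄, d₅, d₆} : Set (TL 4)) := by
  intro e₁ e₂ e₃ Pt Ptbar rt rtbar d₁ d₂ d₃ d₄ d₅ d₆
  have hA : ∀ m n : ℤ, A m * A n = A (m + n) := fun m n =>
    (LaurentPolynomial.T_add m n).symm
  have hA0 : A 0 = 1 := LaurentPolynomial.T_zero
  have hcomm : e₁ * e₃ = e₃ * e₁ := e_comm 4 ⟨0, by norm_num⟩ ⟨2, by norm_num⟩ (by norm_num)
  have h2 : e₂ * e₁ * e₃ = e₂ * e₃ * e₁ := by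
    rw [mul_assoc, hcomm, ← mul_assoc]
  have key : ((A 4 - 1) ^ 2) • (e₁ + e₃ - e₁ * e₂ * e₃ - e₃ * e₂ * e₁)
      = A 2 • rt + A 14 • rtbar + (-(A 4 * (A 4 - 1))) • d₁ + (A 4 - 1) • d₂
        + (-(A 2 * (A 4 - 1))) • d₃ + (-(A 2 * (A 4 - 1))) • d₄
        + (-(A 4 - 1)) • d₅ + (-(A 4 - 1)) • d₆ := by
    unfold rt rtbar Pt Ptbar d₁ d₂ d₃ d₄ d₅ d₆
    rw [show e₃ * e₁ * e₂ = e₁ * e₃ * e₂ by rw [hcomm], ← hcomm, h2]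
    match_scalars
    all_goals try simp only [mul_sub, sub_mul, mul_one, one_mul, mul_neg, neg_mul, neg_neg,
      neg_sub, sub_neg_eq_add, pow_two, mul_assoc, hA]
    all_goals try norm_num [hA0]
    all_goals try ring
  rw [key]
  have mem : ∀ x ∈ ({rt, rtbar, d₁, d₂, d₃, d₄, d₅, d₆} : Set (TL 4)),
      x ∈ Submodule.span R ({rt, rtbar, d₁, d₂, d₃, d₄, d₅, d₆} : Set (TL 4)) :=
    fun x hx => Submodule.subset_span hx
  refine Submodule.add_mem _ (Submodule.add_mem _ (Submodule.add_mem _ (Submodule.add_mem _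
    (Submodule.add_mem _ (Submodule.add_mem _ (Submodule.add_mem _ ?_ ?_) ?_) ?_) ?_) ?_) ?_) ?_ <;>
    exact Submodule.smul_mem _ _ (mem _ (by simp))


end
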